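/- The elements α_k, k ≥ 1, generate the increasing monoid I: the submonoid of I generated by the set {α_k : k ≥ 1} is all of I. -/

import Mathlib

open scoped Classical

noncomputable section

/-- The increasing monoid `I`: the submonoid of `Function.End ℕ+` (functions under
composition) consisting of strictly increasing functions `σ : ℕ+ → ℕ+` such that
`σ n = n + ℓ` for some `ℓ` and all sufficiently large `n`. -/
def IncMonoid : Submonoid (Function.End ℕ+) where
  carrier := {f | StrictMono f ∧ ∃ (l : ℕ) (N : ℕ+), ∀ n : ℕ+, N ≤ n → ((f n : ℕ) = (n : ℕ) + l)}
  one_mem' := ⟨fun _ _ h => h, 0, 1, fun n _ => by show ((n : ℕ+) : ℕ) = (n : ℕ) + 0; omega⟩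
  mul_mem' := by
    rintro f g ⟨hf1, lf, Nf, hf2⟩ ⟨hg1, lg, Ng, hg2⟩
    refine ⟨hf1.comp hg1, lg + lf, max Nf Ng, fun n hn => ?_⟩
    have h1 : (g n : ℕ) = (n : ℕ) + lg := hg2 n (le_trans (le_max_right _ _) hn)
    have h2 : Nf ≤ g n := by
      rw [← PNat.coe_le_coe, h1]
      have : (Nf : ℕ) ≤ (n : ℕ) := (PNat.coe_le_coe _ _).2 (le_trans (le_max_left _ _) hn)
      omega
    have h3 := hf2 (g n) h2
    show ((f (g n) : ℕ)) = (n : ℕ) + (lg + lf)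
    omega

/-- The increasing monoid, as a type. -/
abbrev IncM : Type := IncMonoid

theorem IncM.strictMono (σ : IncM) : StrictMono σ.1 := σ.2.1

theorem IncM.le_apply (σ : IncM) (n : ℕ+) : n ≤ σ.1 n := by
  induction n using PNat.recOn with
  | one => exact (σ.1 1).one_le
  | succ n ih =>
      have h2 : σ.1 n < σ.1 (n + 1) := σ.strictMono (by rw [← PNat.coe_lt_coe]; push_cast; omega)
      rw [← PNat.coe_le_coe] at *
      rw [← PNat.coe_lt_coe] at h2
      push_cast at *
      omega

/-- The underlying function of the generator `α_k`. -/
def alphaFun (k : ℕ+) : Function.End ℕ+ := fun n => if n < k then n else n + 1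

theorem alphaFun_strictMono (k : ℕ+) : StrictMono (alphaFun k) := by
  intro a b hab
  unfold alphaFun
  split_ifs with h1 h2 <;>
    rw [← PNat.coe_lt_coe] at * <;> push_cast at * <;> omega

theorem alphaFun_mem (k : ℕ+) : alphaFun k ∈ IncMonoid := by
  refine ⟨alphaFun_strictMono k, 1, k, fun n hn => ?_⟩
  unfold alphaFun
  rw [if_neg (not_lt.2 hn)]
  push_cast
  ring

/-- The generator `α_k` of the increasing monoid (`k ≥ 1`). -/
def alpha (k : ℕ+) : IncM := ⟨alphaFun k, alphaFun_mem k⟩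

/-- The submonoid `I_{≥ n}` of `I` generated by the `α_i` with `i ≥ n`. -/
def Iges (n : ℕ+) : Submonoid IncM := Submonoid.closure (alpha '' Set.Ici n)

/-- The submonoid `I_{> n}` of `I` generated by the `α_i` with `i > n`. -/
def Igt (n : ℕ) : Submonoid IncM := Submonoid.closure {s | ∃ i : ℕ+, n < (i : ℕ) ∧ s = alpha i}

/-- The monoid algebra `k[I]` of the increasing monoid. -/
abbrev IncAlg (k : Type*) [Field k] : Type _ := MonoidAlgebra k IncM

/-- The image of `σ ∈ I` in the monoid algebra `k[I]`. -/
abbrev ofInc (k : Type*) [Field k] (σ : IncM) : IncAlg k := MonoidAlgebra.of k IncM σ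

/-- A `k[I]`-module is smooth if every vector is fixed by some `I_{>n}`. -/
def IsSmoothMod (k : Type*) [Field k] (M : Type*) [AddCommMonoid M]
    [Module (IncAlg k) M] : Prop :=
  ∀ x : M, ∃ n : ℕ, ∀ σ ∈ Igt n, ofInc k σ • x = x

/-! ### The principal modules `A^r` -/

/-- Index set for the basis of the principal module `A^r`:
strictly increasing `r`-tuples of positive integers. -/
def Idx (r : ℕ) : Type := {v : Fin r → ℕ+ // StrictMono v}

/-- The action of `σ ∈ I` on the index set of `A^r`. -/
def idxAct {r : ℕ} (σ : IncM) (t : Idx r) : Idx r :=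
  ⟨σ.1 ∘ t.1, (IncM.strictMono σ).comp t.2⟩

/-- The representation of the increasing monoid on the principal module `A^r`. -/
def prinRep (k : Type*) [Field k] (r : ℕ) : Representation k IncM (Idx r →₀ k) where
  toFun σ := Finsupp.lmapDomain k k (idxAct σ)
  map_one' := LinearMap.ext fun v => by
    have h : (idxAct (1 : IncM) : Idx r → Idx r) = id := funext fun t => rfl
    simp [Finsupp.lmapDomain_apply, h, Finsupp.mapDomain_id]
  map_mul' := fun σ τ => LinearMap.ext fun v => by
    have h : (idxAct (σ * τ) : Idx r → Idx r) = (idxAct σ) ∘ (idxAct τ) :=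
      funext fun t => rfl
    show Finsupp.lmapDomain k k (idxAct (σ * τ)) v =
      Finsupp.lmapDomain k k (idxAct σ) (Finsupp.lmapDomain k k (idxAct τ) v)
    simp [Finsupp.lmapDomain_apply, h, Finsupp.mapDomain_comp]

/-- The principal module `A^r`, as a module over the monoid algebra `k[I]`. -/
abbrev PrinMod (k : Type*) [Field k] (r : ℕ) : Type _ := (prinRep k r).asModule

/-- The basis vector `e_t` of the principal module `A^r`. -/
def ePrin (k : Type*) [Field k] {r : ℕ} (t : Idx r) : PrinMod k r :=
  (prinRep k r).asModuleEquiv.symm (Finsupp.single t 1)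

/-- The tuple `(1, 2, …, r)` indexing the canonical generator `e_{1,…,r}` of `A^r`. -/
def iotaIdx (r : ℕ) : Idx r :=
  ⟨fun i => ⟨(i : ℕ) + 1, Nat.succ_pos _⟩, fun a b h => by
    exact (PNat.coe_lt_coe ⟨(a : ℕ) + 1, Nat.succ_pos _⟩ ⟨(b : ℕ) + 1, Nat.succ_pos _⟩).1
      (Nat.succ_lt_succ h)⟩

/-! ### The simple modules `B^n` -/

/-- `σ ∈ I` fixes the natural number `n`, with the convention `σ 0 = 0`. -/
def fixesNat (σ : IncM) (n : ℕ) : Prop := ∀ h : 0 < n, σ.1 ⟨n, h⟩ = ⟨n, h⟩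

theorem fixesNat_mul (σ τ : IncM) (n : ℕ) :
    fixesNat (σ * τ) n ↔ fixesNat σ n ∧ fixesNat τ n := by
  rcases Nat.eq_zero_or_pos n with h0 | h0
  · subst h0
    constructor
    · exact fun _ => ⟨fun h => absurd h (lt_irrefl 0), fun h => absurd h (lt_irrefl 0)⟩
    · exact fun _ h => absurd h (lt_irrefl 0)
  · set p : ℕ+ := ⟨n, h0⟩
    have happ : ∀ h : 0 < n, (σ * τ).1 ⟨n, h⟩ = σ.1 (τ.1 ⟨n, h⟩) := fun _ => rfl
    constructor
    · intro h
      have hfix : σ.1 (τ.1 p) = p := h h0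
      have h1 : p ≤ τ.1 p := τ.le_apply p
      have h2 : τ.1 p ≤ σ.1 (τ.1 p) := σ.le_apply _
      have hτp : τ.1 p = p := le_antisymm (h2.trans_eq hfix) h1
      have hσp : σ.1 p = p := by rw [hτp] at hfix; exact hfix
      exact ⟨fun _ => hσp, fun _ => hτp⟩
    · rintro ⟨hσ, hτ⟩ h
      rw [happ h]
      have := hτ h0
      rw [this, hσ h0]

/-- The representation of the increasing monoid on the simple module `B^n`:
`σ` acts by the identity if `σ(n) = n` (with `σ(0) = 0`) and by `0` otherwise. -/
def bRep (k : Type*) [Field k] (n : ℕ) : Representation k IncM k where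
  toFun σ := if fixesNat σ n then 1 else 0
  map_one' := by
    try dsimp only
    rw [if_pos]
    intro h
    rfl
  map_mul' := fun σ τ => by
    try dsimp only
    by_cases hσ : fixesNat σ n
    · by_cases hτ : fixesNat τ n
      · rw [if_pos ((fixesNat_mul σ τ n).2 ⟨hσ, hτ⟩), if_pos hσ, if_pos hτ, one_mul]
      · rw [if_neg (fun h => hτ ((fixesNat_mul σ τ n).1 h).2), if_pos hσ, if_neg hτ, one_mul]
    · by_cases hτ : fixesNat τ n
      · rw [if_neg (fun h => hσ ((fixesNat_mul σ τ n).1 h).1), if_neg hσ, if_pos hτ, mul_one]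
      · rw [if_neg (fun h => hσ ((fixesNat_mul σ τ n).1 h).1), if_neg hσ, if_neg hτ, mul_zero]

/-- The simple module `B^n`, as a module over the monoid algebra `k[I]`. -/
abbrev BMod (k : Type*) [Field k] (n : ℕ) : Type _ := (bRep k n).asModule

theorem alpha_mem_closure (k : ℕ+) : alpha k ∈ Submonoid.closure (Set.range alpha) :=
  Submonoid.subset_closure ⟨k, rfl⟩

theorem aux_closure : ∀ (l : ℕ) (σ : IncM) (N : ℕ+),
    (∀ n : ℕ+, N ≤ n → ((σ.1 n : ℕ) = (n : ℕ) + l)) →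
    σ ∈ Submonoid.closure (Set.range alpha) := by
  intro l
  induction l with
  | zero =>
    intro σ N hN
    have key : ∀ j : ℕ, ∀ n : ℕ+, (N : ℕ) ≤ (n : ℕ) + j → σ.1 n = n := by
      intro j
      induction j with
      | zero =>
        intro n hn
        have h1 : N ≤ n := by rw [← PNat.coe_le_coe]; omega
        have := hN n h1
        exact PNat.coe_injective (by omega)
      | succ j ih =>
        intro n hn
        by_cases h : N ≤ n
        · have := hN n h
          exact PNat.coe_injective (by omega)
        · have h1 : σ.1 (n + 1) = n + 1 := by
            apply ih
            push_cast
            omega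
          have h2 : σ.1 n < σ.1 (n + 1) := σ.strictMono (by
            rw [← PNat.coe_lt_coe]; push_cast; omega)
          rw [h1] at h2
          have h3 := σ.le_apply n
          rw [← PNat.coe_lt_coe] at h2
          rw [← PNat.coe_le_coe] at h3
          push_cast at h2
          exact PNat.coe_injective (by omega)
    have hσ1 : σ = 1 := by
      apply Subtype.ext
      funext n
      exact key (N : ℕ) n (by omega)
    rw [hσ1]
    exact one_mem _
  | succ l ih =>
    intro σ N hN
    set p : ℕ → Prop := fun m => ∃ hm : 0 < m, (σ.1 ⟨m, hm⟩ : ℕ) ≠ m with hp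
    have hpN : p (N : ℕ) := by
      refine ⟨N.pos, ?_⟩
      have : (⟨(N : ℕ), N.pos⟩ : ℕ+) = N := rfl
      rw [this]
      have := hN N le_rfl
      omega
    have hex : ∃ m, p m := ⟨(N : ℕ), hpN⟩
    set k0 := Nat.find hex with hk0def
    obtain ⟨hk0pos, hk0ne⟩ := Nat.find_spec hex
    set k : ℕ+ := ⟨k0, hk0pos⟩ with hkdef
    have hlt : ∀ n : ℕ+, n < k → σ.1 n = n := by
      intro n hn
      rw [← PNat.coe_lt_coe] at hn
      have hmin := Nat.find_min hex (m := (n : ℕ)) hn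
      rw [hp] at hmin
      by_contra hc
      exact hmin ⟨n.pos, fun heq => hc (PNat.coe_injective heq)⟩
    have hkk : (⟨k0, hk0pos⟩ : ℕ+) = k := rfl
    have hne : (σ.1 k : ℕ) ≠ (k : ℕ) := by rw [← hkk]; exact hk0ne
    have hge : ∀ n : ℕ+, (n : ℕ) ≤ (σ.1 n : ℕ) := fun n => by
      have := σ.le_apply n; rwa [← PNat.coe_le_coe] at this
    have hgtk : ∀ n : ℕ+, k ≤ n → (k : ℕ) < (σ.1 n : ℕ) := by
      intro n hn
      have h1 : σ.1 k ≤ σ.1 n := σ.strictMono.monotone hn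
      rw [← PNat.coe_le_coe] at h1
      have h2 := hge k
      omega
    set τf : Function.End ℕ+ := fun n =>
      if h : n < k then n else ⟨(σ.1 n : ℕ) - 1, by
        have := hgtk n (not_lt.1 h)
        have := k.pos
        omega⟩ with hτf
    have hτlt : ∀ n : ℕ+, n < k → τf n = n := fun n hn => dif_pos hn
    have hτge : ∀ n : ℕ+, k ≤ n → (τf n : ℕ) = (σ.1 n : ℕ) - 1 := by
      intro n hn
      rw [hτf]
      simp only [dif_neg (not_lt.2 hn)]
      simp [not_lt.2 hn]
    have hτmono : StrictMono τf := by
      intro a b hab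
      rw [← PNat.coe_lt_coe]
      rw [← PNat.coe_lt_coe] at hab
      by_cases ha : a < k
      · rw [hτlt a ha]
        by_cases hb : b < k
        · rw [hτlt b hb]; exact hab
        · rw [hτge b (not_lt.1 hb)]
          have := hgtk b (not_lt.1 hb)
          rw [← PNat.coe_lt_coe] at ha
          omega
      · have hka : k ≤ a := not_lt.1 ha
        have hkb : k ≤ b := le_trans hka (le_of_lt (by rwa [← PNat.coe_lt_coe]))
        rw [hτge a hka, hτge b hkb]
        have h1 : σ.1 a < σ.1 b := σ.strictMono (by rwa [← PNat.coe_lt_coe])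
        rw [← PNat.coe_lt_coe] at h1
        have := hgtk a hka
        omega
    have hτshift : ∀ n : ℕ+, max N k ≤ n → ((τf n : ℕ) = (n : ℕ) + l) := by
      intro n hn
      have hk : k ≤ n := le_trans (le_max_right _ _) hn
      have hNn : N ≤ n := le_trans (le_max_left _ _) hn
      rw [hτge n hk]
      have := hN n hNn
      have := hgtk n hk
      omega
    set τ : IncM := ⟨τf, hτmono, l, max N k, hτshift⟩ with hτdef
    have heq : σ = alpha k * τ := by
      apply Subtype.ext
      funext n
      show σ.1 n = alphaFun k (τf n)
      unfold alphaFun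
      by_cases h : n < k
      · rw [hτlt n h, if_pos h, hlt n h]
      · have hk : k ≤ n := not_lt.1 h
        have h1 := hτge n hk
        have h2 := hgtk n hk
        rw [if_neg (by rw [not_lt, ← PNat.coe_le_coe]; omega)]
        apply PNat.coe_injective
        push_cast
        omega
    rw [heq]
    exact mul_mem (alpha_mem_closure k) (ih τ (max N k) hτshift)

/-- The `α_k`, `k ≥ 1`, generate the increasing monoid. -/
theorem alpha_generates_increasing_monoid :
    Submonoid.closure (Set.range alpha) = (⊤ : Submonoid IncM) := by
  rw [eq_top_iff]
  intro σ _
  obtain ⟨-, l, N, h⟩ := σ.2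
  exact aux_closure l σ N h

end
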